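/- Let P_{A,E} be a normalized joint distribution on 𝒜 × ℰ, let R ≥ H(A|E|P_{A,E}), and let P(n) be a polynomial with P(n) ≥ 1 for all positive integers n. Then lim_{n→∞} (1/n)·Δ̲_{I,min}(⌈e^{nR}⌉, P(n) | P_{A,E}^n) = R − H(A|E|P_{A,E}). -/

import Mathlib

open Real Finset Filter

attribute [local instance] Classical.propDecidable

namespace Hayashi

def IsSubDist {S : Type*} [Fintype S] (P : S → ℝ) : Prop :=
  (∀ x, 0 ≤ P x) ∧ ∑ x, P x ≤ 1

def IsDist {S : Type*} [Fintype S] (P : S → ℝ) : Prop :=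
  (∀ x, 0 ≤ P x) ∧ ∑ x, P x = 1

variable {A E : Type*} [Fintype A] [Fintype E]

noncomputable def margE (P : A × E → ℝ) (e : E) : ℝ := ∑ a, P (a, e)

noncomputable def margNorm (P : A × E → ℝ) (e : E) : ℝ := margE P e / ∑ e', margE P e'

noncomputable def l1 (P P' : A × E → ℝ) : ℝ := ∑ a, ∑ e, |P (a, e) - P' (a, e)|

noncomputable def eta (x y : ℝ) : ℝ := -x * Real.log x + x * y

noncomputable def condRenyi (P : A × E → ℝ) (Q : E → ℝ) (s : ℝ) : ℝ :=
  (-1 / s) * Real.log (∑ a, ∑ e, P (a, e) ^ (1 + s) * Q e ^ (-s))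

noncomputable def condRenyiUp (P : A × E → ℝ) (s : ℝ) : ℝ :=
  sSup {x | ∃ Q : E → ℝ, IsDist Q ∧ (∀ e, 0 < Q e) ∧ x = condRenyi P Q s}

noncomputable def condRenyiDown (P : A × E → ℝ) (s : ℝ) : ℝ :=
  condRenyi P (margNorm P) s

noncomputable def condEnt (P : A × E → ℝ) : ℝ :=
  -∑ a, ∑ e, P (a, e) * Real.log (P (a, e) / margE P e)

noncomputable def H2cond (P : A × E → ℝ) (Q : E → ℝ) : ℝ :=
  -Real.log (∑ a, ∑ e, P (a, e) ^ 2 / Q e)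

noncomputable def d2cond (P : A × E → ℝ) (Q : E → ℝ) : ℝ :=
  ∑ a, ∑ e, (P (a, e) - margE P e / (Fintype.card A : ℝ)) ^ 2 / Q e

noncomputable def d1' (P : A × E → ℝ) : ℝ :=
  ∑ a, ∑ e, |P (a, e) - margE P e / (Fintype.card A : ℝ)|

noncomputable def Iprime (P : A × E → ℝ) : ℝ :=
  ∑ a, ∑ e, P (a, e) * Real.log (P (a, e) * (Fintype.card A : ℝ) / margE P e)

noncomputable def Hmin (P : A × E → ℝ) (Q : E → ℝ) : ℝ :=
  -Real.log (sSup {r | ∃ a e, 0 < Q e ∧ r = P (a, e) / Q e})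

noncomputable def D2div {E : Type*} [Fintype E] (P Q : E → ℝ) : ℝ :=
  Real.log (∑ e, P e ^ 2 / Q e)

noncomputable def pushHash {B : Type*} (f : A → B) (P : A × E → ℝ) : B × E → ℝ :=
  fun be => ∑ a, (if f a = be.1 then P (a, be.2) else 0)

noncomputable def Delta_d2 (M ε : ℝ) (P : A × E → ℝ) : ℝ :=
  sInf {x | ∃ (Q : E → ℝ) (P' : A × E → ℝ), IsDist Q ∧ (∀ e, 0 < Q e) ∧ IsSubDist P' ∧
    x = 2 * l1 P P' + Real.sqrt ε * Real.sqrt M * Real.exp (-H2cond P' Q / 2)}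

noncomputable def Delta_I2 (M ε : ℝ) (P : A × E → ℝ) : ℝ :=
  sInf {x | ∃ P' : A × E → ℝ, IsSubDist P' ∧ (∀ e, margE P' e ≤ margE P e) ∧
    x = eta (l1 P P') (Real.log M) + ε * M * Real.exp (-H2cond P' (margE P))}

noncomputable def Delta_dmin (M ε : ℝ) (P : A × E → ℝ) : ℝ :=
  sInf {x | ∃ (Q : E → ℝ) (P' : A × E → ℝ), IsDist Q ∧ (∀ e, 0 < Q e) ∧ IsSubDist P' ∧
    x = 2 * l1 P P' + Real.sqrt ε * Real.sqrt M * Real.exp (-Hmin P' Q / 2)}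

noncomputable def Delta_Imin (M ε : ℝ) (P : A × E → ℝ) : ℝ :=
  sInf {x | ∃ P' : A × E → ℝ, IsSubDist P' ∧ (∀ e, margE P' e ≤ margE P e) ∧
    x = eta (l1 P P') (Real.log M) + ε * M * Real.exp (-Hmin P' (margE P))}

noncomputable def DeltaBar_Imin (M ε : ℝ) (P : A × E → ℝ) : ℝ :=
  sInf {x | ∃ P' : A × E → ℝ, IsSubDist P' ∧ (∀ e, margE P' e ≤ margE P e) ∧
    x = eta (l1 P P') (Real.log M) + Real.log (1 + ε * M * Real.exp (-Hmin P' (margE P)))}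

noncomputable def Pn (P : A × E → ℝ) (n : ℕ) : (Fin n → A) × (Fin n → E) → ℝ :=
  fun ae => ∏ i, P (ae.1 i, ae.2 i)

section AuxDev

variable {A E : Type*} [Fintype A] [Fintype E]

lemma margE_nonneg {P : A × E → ℝ} (hP : ∀ p, 0 ≤ P p) (e : E) : 0 ≤ margE P e :=
  Finset.sum_nonneg fun a _ => hP _

lemma le_margE {P : A × E → ℝ} (hP : ∀ p, 0 ≤ P p) (a : A) (e : E) : P (a, e) ≤ margE P e :=
  Finset.single_le_sum (fun a _ => hP (a, e)) (Finset.mem_univ a)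

noncomputable def Xf (P : A × E → ℝ) : A × E → ℝ :=
  fun p => Real.log (margE P p.2) - Real.log (P p)

noncomputable def SY (P : A × E → ℝ) (n : ℕ) : (Fin n → A) × (Fin n → E) → ℝ :=
  fun ae => ∑ i, (Xf P (ae.1 i, ae.2 i) - condEnt P)

noncomputable def Vr (P : A × E → ℝ) : ℝ := ∑ p : A × E, P p * (Xf P p - condEnt P) ^ 2

lemma Vr_nonneg (P : A × E → ℝ) (hP : ∀ p, 0 ≤ P p) : 0 ≤ Vr P :=
  Finset.sum_nonneg fun p _ => mul_nonneg (hP p) (sq_nonneg _)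

lemma condEnt_eq (P : A × E → ℝ) :
    condEnt P = -∑ p : A × E, P p * Real.log (P p / margE P p.2) := by
  rw [condEnt, Fintype.sum_prod_type]

lemma EX {P : A × E → ℝ} (hP : IsDist P) : ∑ p, P p * Xf P p = condEnt P := by
  rw [condEnt_eq, ← Finset.sum_neg_distrib]
  apply Finset.sum_congr rfl
  intro p _
  rcases eq_or_lt_of_le (hP.1 p) with h | h
  · simp [Xf, ← h]
  · have hq : 0 < margE P p.2 := lt_of_lt_of_le h (by simpa using le_margE hP.1 p.1 p.2)
    rw [Real.log_div (ne_of_gt h) (ne_of_gt hq)]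
    simp [Xf]; ring

lemma EY {P : A × E → ℝ} (hP : IsDist P) : ∑ p, P p * (Xf P p - condEnt P) = 0 := by
  simp only [mul_sub, Finset.sum_sub_distrib, EX hP, ← Finset.sum_mul, hP.2]
  ring

lemma sum_pair_prod (n : ℕ) (f : Fin n → A × E → ℝ) :
    ∑ ae : (Fin n → A) × (Fin n → E), ∏ i, f i (ae.1 i, ae.2 i) = ∏ i, ∑ p : A × E, f i p := by
  rw [Fintype.prod_sum]
  exact (Fintype.sum_equiv (Equiv.arrowProdEquivProdArrow (Fin n) (fun _ => A) (fun _ => E)) _ _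
    (fun g => by simp [Equiv.arrowProdEquivProdArrow])).symm

lemma sum_Pn {P : A × E → ℝ} (hP : IsDist P) (n : ℕ) : ∑ ae, Pn P n ae = 1 := by
  have h := sum_pair_prod n (fun _ p => (P p : ℝ))
  simpa [Pn, hP.2] using h

lemma Pn_nonneg {P : A × E → ℝ} (hP : ∀ p, 0 ≤ P p) (n : ℕ) (ae) : 0 ≤ Pn P n ae :=
  Finset.prod_nonneg fun i _ => hP _

lemma margE_Pn (P : A × E → ℝ) (n : ℕ) (e : Fin n → E) :
    margE (Pn P n) e = ∏ i, margE P (e i) := by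
  rw [margE]
  exact (Fintype.prod_sum (fun (i : Fin n) (x : A) => P (x, e i))).symm

end AuxDev
section AuxDev2
set_option linter.unusedSectionVars false
set_option linter.unusedVariables false

variable {A E : Type*} [Fintype A] [Fintype E]

lemma moment_diag {P : A × E → ℝ} (hP : IsDist P) (n : ℕ) (g : A × E → ℝ) (i : Fin n) :
    ∑ ae : (Fin n → A) × (Fin n → E), Pn P n ae * g (ae.1 i, ae.2 i) = ∑ p, P p * g p := by
  have h := sum_pair_prod n (fun k p => P p * (if k = i then g p else 1))
  have hL : ∀ ae : (Fin n → A) × (Fin n → E),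
      (∏ k, (P (ae.1 k, ae.2 k) * (if k = i then g (ae.1 k, ae.2 k) else 1)))
        = Pn P n ae * g (ae.1 i, ae.2 i) := by
    intro ae
    rw [Finset.prod_mul_distrib, Finset.prod_ite_eq' Finset.univ i
      (fun k => g (ae.1 k, ae.2 k))]
    simp [Pn]
  have hR : ∀ k : Fin n, (∑ p, P p * (if k = i then g p else 1))
      = if k = i then ∑ p, P p * g p else 1 := by
    intro k
    by_cases hk : k = i <;> simp [hk, hP.2]
  rw [Finset.sum_congr rfl (fun ae _ => (hL ae).symm), h,
    Finset.prod_congr rfl (fun k _ => hR k),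
    Finset.prod_ite_eq' Finset.univ i (fun _ => ∑ p, P p * g p)]
  simp

lemma prod_two {M : Type*} [CommMonoid M] {n : ℕ} {i j : Fin n} (hij : i ≠ j)
    (u : Fin n → M) (hu : ∀ k, k ≠ i → k ≠ j → u k = 1) : ∏ k, u k = u i * u j := by
  rw [← Finset.mul_prod_erase Finset.univ u (Finset.mem_univ i),
    ← Finset.mul_prod_erase _ u
      (Finset.mem_erase.2 ⟨fun h => hij h.symm, Finset.mem_univ j⟩)]
  rw [Finset.prod_eq_one]
  · rw [mul_one]
  · intro k hk
    rw [Finset.mem_erase, Finset.mem_erase] at hk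
    exact hu k hk.2.1 hk.1

lemma moment_cross {P : A × E → ℝ} (hP : IsDist P) {n : ℕ} (g h : A × E → ℝ) {i j : Fin n}
    (hij : i ≠ j) :
    ∑ ae : (Fin n → A) × (Fin n → E), Pn P n ae * (g (ae.1 i, ae.2 i) * h (ae.1 j, ae.2 j))
      = (∑ p, P p * g p) * (∑ p, P p * h p) := by
  have hji : j ≠ i := Ne.symm hij
  have hsum := sum_pair_prod n
    (fun k p => P p * (if k = i then g p else if k = j then h p else 1))
  have hL : ∀ ae : (Fin n → A) × (Fin n → E),
      (∏ k, (P (ae.1 k, ae.2 k) *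
          (if k = i then g (ae.1 k, ae.2 k) else if k = j then h (ae.1 k, ae.2 k) else 1)))
        = Pn P n ae * (g (ae.1 i, ae.2 i) * h (ae.1 j, ae.2 j)) := by
    intro ae
    rw [Finset.prod_mul_distrib,
      prod_two hij (fun k => if k = i then g (ae.1 k, ae.2 k)
        else if k = j then h (ae.1 k, ae.2 k) else 1)
        (fun k hk1 hk2 => by simp [hk1, hk2])]
    simp [Pn, hji]
  have hR : ∀ k : Fin n,
      (∑ p, P p * (if k = i then g p else if k = j then h p else 1))
        = if k = i then ∑ p, P p * g p else if k = j then ∑ p, P p * h p else 1 := by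
    intro k
    by_cases hk : k = i
    · simp [hk]
    · by_cases hk2 : k = j <;> simp [hk, hk2, hP.2]
  rw [Finset.sum_congr rfl (fun ae _ => (hL ae).symm), hsum,
    Finset.prod_congr rfl (fun k _ => hR k),
    prod_two hij _ (fun k hk1 hk2 => by simp [hk1, hk2])]
  simp [hji]

lemma moment_sq {P : A × E → ℝ} (hP : IsDist P) (n : ℕ) :
    ∑ ae, Pn P n ae * (SY P n ae) ^ 2 = n * Vr P := by
  have inner : ∀ i : Fin n,
      (∑ j : Fin n, ∑ ae : (Fin n → A) × (Fin n → E), Pn P n ae *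
          ((Xf P (ae.1 i, ae.2 i) - condEnt P) * (Xf P (ae.1 j, ae.2 j) - condEnt P)))
        = Vr P := by
    intro i
    have hterm : ∀ j : Fin n,
        (∑ ae : (Fin n → A) × (Fin n → E), Pn P n ae *
            ((Xf P (ae.1 i, ae.2 i) - condEnt P) * (Xf P (ae.1 j, ae.2 j) - condEnt P)))
          = if j = i then Vr P else 0 := by
      intro j
      by_cases hji : j = i
      · subst hji
        rw [if_pos rfl]
        calc ∑ ae : (Fin n → A) × (Fin n → E), Pn P n ae *
              ((Xf P (ae.1 j, ae.2 j) - condEnt P) * (Xf P (ae.1 j, ae.2 j) - condEnt P))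
            = ∑ ae : (Fin n → A) × (Fin n → E),
                Pn P n ae * (Xf P (ae.1 j, ae.2 j) - condEnt P) ^ 2 :=
              Finset.sum_congr rfl fun ae _ => by rw [sq]
          _ = ∑ p, P p * (Xf P p - condEnt P) ^ 2 :=
              moment_diag hP n (fun p => (Xf P p - condEnt P) ^ 2) j
          _ = Vr P := rfl
      · rw [if_neg hji,
          moment_cross hP (fun p => Xf P p - condEnt P) (fun p => Xf P p - condEnt P)
            (fun h => hji (by simpa using h.symm) : i ≠ j), EY hP]
        ring
    rw [Finset.sum_congr rfl (fun j _ => hterm j)]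
    simp
  calc ∑ ae, Pn P n ae * (SY P n ae) ^ 2
      = ∑ ae : (Fin n → A) × (Fin n → E), ∑ i : Fin n, ∑ j : Fin n, Pn P n ae *
          ((Xf P (ae.1 i, ae.2 i) - condEnt P) * (Xf P (ae.1 j, ae.2 j) - condEnt P)) := by
        apply Finset.sum_congr rfl
        intro ae _
        rw [sq, SY, Finset.sum_mul_sum, Finset.mul_sum]
        exact Finset.sum_congr rfl fun i _ => by rw [Finset.mul_sum]
    _ = ∑ i : Fin n, ∑ ae : (Fin n → A) × (Fin n → E), ∑ j : Fin n, Pn P n ae *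
          ((Xf P (ae.1 i, ae.2 i) - condEnt P) * (Xf P (ae.1 j, ae.2 j) - condEnt P)) :=
        Finset.sum_comm
    _ = ∑ i : Fin n, ∑ j : Fin n, ∑ ae : (Fin n → A) × (Fin n → E), Pn P n ae *
          ((Xf P (ae.1 i, ae.2 i) - condEnt P) * (Xf P (ae.1 j, ae.2 j) - condEnt P)) :=
        Finset.sum_congr rfl fun i _ => Finset.sum_comm
    _ = ∑ i : Fin n, Vr P := Finset.sum_congr rfl fun i _ => inner i
    _ = n * Vr P := by simp [mul_comm]

lemma cheb {P : A × E → ℝ} (hP : IsDist P) (n : ℕ) {t : ℝ} (ht : 0 < t) :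
    ∑ ae ∈ Finset.univ.filter (fun ae => ¬ |SY P n ae| ≤ t), Pn P n ae ≤ n * Vr P / t ^ 2 := by
  have step1 : ∀ ae ∈ Finset.univ.filter (fun ae => ¬ |SY P n ae| ≤ t),
      Pn P n ae ≤ Pn P n ae * (SY P n ae) ^ 2 / t ^ 2 := by
    intro ae hae
    rw [Finset.mem_filter] at hae
    have h1 : t ≤ |SY P n ae| := le_of_not_ge hae.2
    have h2 : t ^ 2 ≤ (SY P n ae) ^ 2 := by
      calc t ^ 2 ≤ |SY P n ae| ^ 2 := by
            apply pow_le_pow_left₀ ht.le h1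
        _ = (SY P n ae) ^ 2 := sq_abs _
    rw [le_div_iff₀ (by positivity)]
    exact mul_le_mul_of_nonneg_left h2 (Pn_nonneg hP.1 n ae)
  calc ∑ ae ∈ Finset.univ.filter (fun ae => ¬ |SY P n ae| ≤ t), Pn P n ae
      ≤ ∑ ae ∈ Finset.univ.filter (fun ae => ¬ |SY P n ae| ≤ t),
          Pn P n ae * (SY P n ae) ^ 2 / t ^ 2 := Finset.sum_le_sum step1
    _ ≤ ∑ ae, Pn P n ae * (SY P n ae) ^ 2 / t ^ 2 := by
        apply Finset.sum_le_sum_of_subset_of_nonneg (Finset.filter_subset _ _)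
        intro ae _ _
        have := Pn_nonneg hP.1 n ae
        positivity
    _ = n * Vr P / t ^ 2 := by
        rw [← Finset.sum_div, moment_sq hP n]

end AuxDev2
section AuxDev3
set_option linter.unusedSectionVars false
set_option linter.unusedVariables false

variable {A E : Type*} [Fintype A] [Fintype E]

lemma Pn_pos_eq {P : A × E → ℝ} (hP : IsDist P) {n : ℕ}
    {ae : (Fin n → A) × (Fin n → E)} (h : Pn P n ae ≠ 0) :
    Pn P n ae = (∏ i, margE P (ae.2 i)) * Real.exp (-(SY P n ae + n * condEnt P)) := by
  have hpos : ∀ i : Fin n, 0 < P (ae.1 i, ae.2 i) := by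
    intro i
    rcases eq_or_lt_of_le (hP.1 (ae.1 i, ae.2 i)) with h0 | h0
    · exact absurd (Finset.prod_eq_zero (Finset.mem_univ i) h0.symm) h
    · exact h0
  have hq : ∀ i : Fin n, 0 < margE P (ae.2 i) :=
    fun i => lt_of_lt_of_le (hpos i) (le_margE hP.1 _ _)
  have hsum : SY P n ae + n * condEnt P = ∑ i, Xf P (ae.1 i, ae.2 i) := by
    rw [SY, Finset.sum_sub_distrib, Finset.sum_const, Finset.card_univ, Fintype.card_fin,
      nsmul_eq_mul]
    ring
  rw [hsum, ← Finset.sum_neg_distrib, Real.exp_sum, Finset.prod_mul_distrib.symm]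
  rw [Pn]
  apply Finset.prod_congr rfl
  intro i _
  have : Real.exp (-(Xf P (ae.1 i, ae.2 i)))
      = P (ae.1 i, ae.2 i) / margE P (ae.2 i) := by
    rw [Xf, neg_sub, ← Real.log_div (ne_of_gt (hpos i)) (ne_of_gt (hq i)),
      Real.exp_log (div_pos (hpos i) (hq i))]
  rw [this, mul_div_cancel₀ _ (ne_of_gt (hq i))]

lemma condEnt_nonneg {P : A × E → ℝ} (hP : IsDist P) : 0 ≤ condEnt P := by
  rw [condEnt_eq, neg_nonneg]
  apply Finset.sum_nonpos
  intro p _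
  rcases eq_or_lt_of_le (hP.1 p) with h0 | h0
  · simp [← h0]
  · have hq : 0 < margE P p.2 := lt_of_lt_of_le h0 (by simpa using le_margE hP.1 p.1 p.2)
    apply mul_nonpos_of_nonneg_of_nonpos (hP.1 p)
    apply Real.log_nonpos (by positivity)
    exact div_le_one_of_le₀ (by simpa using le_margE hP.1 p.1 p.2) hq.le

lemma l1_eq (P P' : A × E → ℝ) : l1 P P' = ∑ p : A × E, |P p - P' p| := by
  rw [l1, Fintype.sum_prod_type]

lemma l1_nonneg (P P' : A × E → ℝ) : 0 ≤ l1 P P' := by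
  rw [l1_eq]; exact Finset.sum_nonneg fun p _ => abs_nonneg _

lemma l1_le_two {P P' : A × E → ℝ} (h : IsSubDist P) (h' : IsSubDist P') : l1 P P' ≤ 2 := by
  rw [l1_eq]
  calc ∑ p : A × E, |P p - P' p| ≤ ∑ p : A × E, (P p + P' p) := by
        apply Finset.sum_le_sum
        intro p _
        calc |P p - P' p| ≤ |P p| + |P' p| := abs_sub _ _
          _ = P p + P' p := by rw [abs_of_nonneg (h.1 p), abs_of_nonneg (h'.1 p)]
    _ = (∑ p, P p) + ∑ p, P' p := Finset.sum_add_distrib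
    _ ≤ 1 + 1 := add_le_add h.2 h'.2
    _ = 2 := by norm_num

lemma mul_log_le_two_log_two {x : ℝ} (h0 : 0 ≤ x) (h2 : x ≤ 2) :
    x * Real.log x ≤ 2 * Real.log 2 := by
  rcases le_or_gt x 1 with h1 | h1
  · have h' : x * Real.log x ≤ 0 :=
      mul_nonpos_of_nonneg_of_nonpos h0 (Real.log_nonpos h0 h1)
    exact h'.trans (mul_nonneg two_pos.le (Real.log_nonneg one_le_two))
  · apply mul_le_mul h2 (Real.log_le_log (by linarith) h2) ?_ (by norm_num)
    exact Real.log_nonneg h1.le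

lemma eta_lower {x y : ℝ} (h0 : 0 ≤ x) (h2 : x ≤ 2) (hy : 0 ≤ y) :
    -(2 * Real.log 2) ≤ eta x y := by
  rw [eta]
  have h1 : -(2 * Real.log 2) ≤ -x * Real.log x := by
    rw [neg_mul]
    exact neg_le_neg (mul_log_le_two_log_two h0 h2)
  nlinarith [mul_nonneg h0 hy]

lemma neg_mul_log_le_one {x : ℝ} (h0 : 0 ≤ x) (h1 : x ≤ 1) : -x * Real.log x ≤ 1 := by
  rcases eq_or_lt_of_le h0 with h | h
  · simp [← h]
  · have hlog : Real.log x⁻¹ ≤ x⁻¹ - 1 := Real.log_le_sub_one_of_pos (by positivity)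
    rw [Real.log_inv] at hlog
    have : -x * Real.log x ≤ x * (x⁻¹ - 1) := by
      rw [neg_mul]
      nlinarith [hlog, h]
    calc -x * Real.log x ≤ x * (x⁻¹ - 1) := this
      _ = 1 - x := by field_simp
      _ ≤ 1 := by linarith

lemma exp_neg_Hmin_bound {P' : A × E → ℝ} {Q : E → ℝ} (hP' : ∀ p, 0 ≤ P' p)
    (hmar : ∀ e, margE P' e ≤ Q e) (a : A) (e : E) :
    P' (a, e) ≤ Real.exp (-(Hmin P' Q)) * Q e := by
  set S := {r | ∃ a e, 0 < Q e ∧ r = P' (a, e) / Q e} with hS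
  have hub : ∀ r ∈ S, r ≤ 1 := by
    rintro r ⟨a', e', hq, rfl⟩
    exact div_le_one_of_le₀ ((le_margE hP' a' e').trans (hmar e')) hq.le
  have hbdd : BddAbove S := ⟨1, hub⟩
  rcases le_or_gt (Q e) 0 with hQ | hQ
  · have h1 : margE P' e ≤ 0 := (hmar e).trans hQ
    have h2 : P' (a, e) ≤ 0 := (le_margE hP' a e).trans h1
    have h3 : P' (a, e) = 0 := le_antisymm h2 (hP' _)
    have hQ0 : Q e = 0 := le_antisymm hQ ((margE_nonneg hP' e).trans (hmar e))
    rw [h3, hQ0, mul_zero]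
  · have hmem : P' (a, e) / Q e ∈ S := ⟨a, e, hQ, rfl⟩
    have hle : P' (a, e) / Q e ≤ sSup S := le_csSup hbdd hmem
    rcases le_or_gt (sSup S) 0 with hs | hs
    · have hzero : P' (a, e) / Q e = 0 := le_antisymm (hle.trans hs)
        (div_nonneg (hP' _) hQ.le)
      rcases div_eq_zero_iff.1 hzero with h | h
      · rw [h]
        exact mul_nonneg (Real.exp_nonneg _) hQ.le
      · exact absurd h (ne_of_gt hQ)
    · have heq : Real.exp (-(Hmin P' Q)) = sSup S := by
        rw [Hmin, neg_neg, Real.exp_log hs]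
      rw [heq]
      exact (div_le_iff₀ hQ).1 hle

lemma exp_neg_Hmin_le {P' : A × E → ℝ} {Q : E → ℝ} {c : ℝ}
    (hub : ∀ a e, 0 < Q e → P' (a, e) / Q e ≤ c)
    (hex : ∃ a e, 0 < Q e ∧ 0 < P' (a, e) / Q e) :
    Real.exp (-(Hmin P' Q)) ≤ c := by
  set S := {r | ∃ a e, 0 < Q e ∧ r = P' (a, e) / Q e} with hS
  have hubS : ∀ r ∈ S, r ≤ c := by rintro r ⟨a', e', hq, rfl⟩; exact hub a' e' hq
  have hbdd : BddAbove S := ⟨c, hubS⟩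
  obtain ⟨a, e, hq, hpos⟩ := hex
  have hmem : P' (a, e) / Q e ∈ S := ⟨a, e, hq, rfl⟩
  have hs : 0 < sSup S := lt_of_lt_of_le hpos (le_csSup hbdd hmem)
  rw [Hmin, neg_neg, Real.exp_log hs]
  exact csSup_le ⟨_, hmem⟩ hubS

end AuxDev3
section AuxDev4
set_option linter.unusedSectionVars false
set_option linter.unusedVariables false

lemma poly_log_tendsto (Q : Polynomial ℝ) :
    Filter.Tendsto (fun n : ℕ => Real.log (max 1 (Q.eval (n : ℝ))) / n)
      Filter.atTop (nhds 0) := by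
  set d := Q.natDegree with hd
  set K : ℝ := max 1 (∑ i ∈ Finset.range (d + 1), |Q.coeff i|) with hK
  have hK1 : (1 : ℝ) ≤ K := le_max_left _ _
  have hbound : ∀ n : ℕ, 1 ≤ n → max 1 (Q.eval (n : ℝ)) ≤ K * (n : ℝ) ^ d := by
    intro n hn
    have hn1 : (1 : ℝ) ≤ (n : ℝ) := by exact_mod_cast hn
    have hpow : (1 : ℝ) ≤ (n : ℝ) ^ d := by
      calc (1 : ℝ) = 1 ^ d := (one_pow d).symm
        _ ≤ (n : ℝ) ^ d := pow_le_pow_left₀ one_pos.le hn1 d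
    apply max_le
    · nlinarith
    · calc Q.eval (n : ℝ) = ∑ i ∈ Finset.range (d + 1), Q.coeff i * (n : ℝ) ^ i :=
          Q.eval_eq_sum_range _
        _ ≤ ∑ i ∈ Finset.range (d + 1), |Q.coeff i| * (n : ℝ) ^ d := by
            apply Finset.sum_le_sum
            intro i hi
            have hi' : i ≤ d := Nat.lt_succ_iff.1 (Finset.mem_range.1 hi)
            calc Q.coeff i * (n : ℝ) ^ i ≤ |Q.coeff i| * (n : ℝ) ^ i := by
                  apply mul_le_mul_of_nonneg_right (le_abs_self _) (by positivity)
              _ ≤ |Q.coeff i| * (n : ℝ) ^ d := by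
                  apply mul_le_mul_of_nonneg_left _ (abs_nonneg _)
                  exact pow_le_pow_right₀ hn1 hi'
        _ = (∑ i ∈ Finset.range (d + 1), |Q.coeff i|) * (n : ℝ) ^ d := by
            rw [Finset.sum_mul]
        _ ≤ K * (n : ℝ) ^ d := by
            apply mul_le_mul_of_nonneg_right (le_max_right _ _) (by positivity)
  have hlim : Filter.Tendsto (fun n : ℕ => (Real.log K + d * Real.log n) / n)
      Filter.atTop (nhds 0) := by
    have h1 : Filter.Tendsto (fun n : ℕ => Real.log n / n) Filter.atTop (nhds 0) :=
      (Real.isLittleO_log_id_atTop.tendsto_div_nhds_zero).comp tendsto_natCast_atTop_atTop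
    have h2 : Filter.Tendsto (fun n : ℕ => ((n : ℝ))⁻¹) Filter.atTop (nhds 0) :=
      tendsto_inv_atTop_zero.comp tendsto_natCast_atTop_atTop
    have h3 := (h2.const_mul (Real.log K)).add (h1.const_mul (d : ℝ))
    rw [mul_zero, mul_zero, add_zero] at h3
    apply h3.congr
    intro n
    field_simp
  apply tendsto_of_tendsto_of_tendsto_of_le_of_le' tendsto_const_nhds hlim
  · filter_upwards with n
    exact div_nonneg (Real.log_nonneg (le_max_left _ _)) (Nat.cast_nonneg n)
  · filter_upwards [Filter.eventually_ge_atTop 1] with n hn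
    have hn1 : (1 : ℝ) ≤ (n : ℝ) := by exact_mod_cast hn
    have hnum : Real.log (max 1 (Q.eval (n : ℝ))) ≤ Real.log K + d * Real.log n := by
      calc Real.log (max 1 (Q.eval (n : ℝ))) ≤ Real.log (K * (n : ℝ) ^ d) :=
            Real.log_le_log (lt_of_lt_of_le one_pos (le_max_left _ _)) (hbound n hn)
        _ = Real.log K + d * Real.log n := by
            rw [Real.log_mul (by positivity) (by positivity), Real.log_pow]
    exact (div_le_div_iff_of_pos_right (by positivity : (0:ℝ) < (n : ℝ))).2 hnum
end AuxDev4
section AuxDev5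
set_option linter.unusedSectionVars false
set_option linter.unusedVariables false

variable {A E : Type*} [Fintype A] [Fintype E]

lemma Pn_subDist {P : A × E → ℝ} (hP : IsDist P) (n : ℕ) : IsSubDist (Pn P n) :=
  ⟨Pn_nonneg hP.1 n, le_of_eq (sum_Pn hP n)⟩

lemma bddBelow_DeltaSet {P₀ : A × E → ℝ} (h0 : IsSubDist P₀) {M εv : ℝ}
    (hM : 1 ≤ M) (hε : 0 ≤ εv) :
    ∀ x ∈ {x | ∃ P' : A × E → ℝ, IsSubDist P' ∧ (∀ e, margE P' e ≤ margE P₀ e) ∧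
      x = eta (l1 P₀ P') (Real.log M) + Real.log (1 + εv * M * Real.exp (-Hmin P' (margE P₀)))},
      -(2 * Real.log 2) ≤ x := by
  rintro x ⟨P', hP', hmar, rfl⟩
  have h1 : -(2 * Real.log 2) ≤ eta (l1 P₀ P') (Real.log M) :=
    eta_lower (l1_nonneg _ _) (l1_le_two h0 hP') (Real.log_nonneg hM)
  have h2 : 0 ≤ Real.log (1 + εv * M * Real.exp (-Hmin P' (margE P₀))) := by
    apply Real.log_nonneg
    have : 0 ≤ εv * M * Real.exp (-Hmin P' (margE P₀)) := by positivity
    linarith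
  linarith

lemma UB {P : A × E → ℝ} (hP : IsDist P) {R : ℝ} (hR : condEnt P ≤ R)
    {δ εv : ℝ} (hδ : 0 < δ) {n : ℕ} (hn : 1 ≤ n) (hε : 1 ≤ εv)
    (hα : Vr P / (n * δ ^ 2) ≤ 1 / 2) :
    DeltaBar_Imin ((⌈Real.exp (n * R)⌉₊ : ℝ)) εv (Pn P n)
      ≤ 1 + Vr P / (n * δ ^ 2) * (n * R + Real.log 2) + Real.log (1 + 2 * εv)
        + n * (R - condEnt P + δ) := by
  set H := condEnt P with hH
  set M : ℝ := ((⌈Real.exp (n * R)⌉₊ : ℝ)) with hM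
  set α : ℝ := Vr P / (n * δ ^ 2) with hαdef
  have hn0 : (0 : ℝ) < n := by exact_mod_cast hn
  have hH0 : 0 ≤ H := condEnt_nonneg hP
  have hR0 : 0 ≤ R := hH0.trans hR
  have hexp1 : (1 : ℝ) ≤ Real.exp (n * R) := Real.one_le_exp (by positivity)
  have hM1 : (1 : ℝ) ≤ M :=
    Nat.one_le_cast.2 (Nat.ceil_pos.2 (lt_of_lt_of_le one_pos hexp1))
  have hMlog : n * R ≤ Real.log M := by
    calc n * R = Real.log (Real.exp (n * R)) := (Real.log_exp _).symm
      _ ≤ Real.log M := Real.log_le_log (Real.exp_pos _) (Nat.le_ceil _)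
  have hMle : M ≤ 2 * Real.exp (n * R) := by
    have h2 : M < Real.exp (n * R) + 1 := Nat.ceil_lt_add_one (le_of_lt (Real.exp_pos (n * R)))
    linarith
  have hMloghi : Real.log M ≤ n * R + Real.log 2 := by
    calc Real.log M ≤ Real.log (2 * Real.exp (n * R)) :=
          Real.log_le_log (by positivity) hMle
      _ = Real.log 2 + n * R := by
          rw [Real.log_mul two_ne_zero (Real.exp_ne_zero _), Real.log_exp]
      _ = n * R + Real.log 2 := by ring
  have hα0 : 0 ≤ α := by
    rw [hαdef]
    have := Vr_nonneg P hP.1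
    positivity
  set P' : (Fin n → A) × (Fin n → E) → ℝ :=
    fun ae => if |SY P n ae| ≤ n * δ then Pn P n ae else 0 with hP'def
  have hP'le : ∀ ae, P' ae ≤ Pn P n ae := by
    intro ae
    rw [hP'def]
    dsimp only
    split
    · exact le_rfl
    · exact Pn_nonneg hP.1 n ae
  have hP'nn : ∀ ae, 0 ≤ P' ae := by
    intro ae
    rw [hP'def]
    dsimp only
    split
    · exact Pn_nonneg hP.1 n ae
    · exact le_rfl
  have hP'sub : IsSubDist P' :=
    ⟨hP'nn, le_trans (Finset.sum_le_sum fun ae _ => hP'le ae) (le_of_eq (sum_Pn hP n))⟩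
  have hP'mar : ∀ e, margE P' e ≤ margE (Pn P n) e :=
    fun e => Finset.sum_le_sum fun a _ => hP'le (a, e)
  have hcheb := cheb hP n (t := n * δ) (by positivity)
  have hchebval : (n : ℝ) * Vr P / (n * δ) ^ 2 = α := by
    rw [hαdef]
    field_simp
  have hl1 : l1 (Pn P n) P' ≤ α := by
    rw [l1_eq]
    have heq : ∀ p : (Fin n → A) × (Fin n → E),
        |Pn P n p - P' p| = if ¬ |SY P n p| ≤ n * δ then Pn P n p else 0 := by
      intro p
      rw [hP'def]
      by_cases hc : |SY P n p| ≤ n * δ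
      · simp [hc]
      · simp [hc, abs_of_nonneg (Pn_nonneg hP.1 n p)]
    rw [Finset.sum_congr rfl fun p _ => heq p, ← Finset.sum_filter, ← hchebval]
    exact hcheb
  have hl1nn : 0 ≤ l1 (Pn P n) P' := l1_nonneg _ _
  have hHminexp : Real.exp (-Hmin P' (margE (Pn P n))) ≤ Real.exp (n * δ - n * H) := by
    apply exp_neg_Hmin_le
    · intro a e hQ
      by_cases hz : P' (a, e) = 0
      · rw [hz, zero_div]
        exact (Real.exp_pos _).le
      · have hcond : |SY P n (a, e)| ≤ n * δ := by
          by_contra hc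
          rw [hP'def] at hz
          simp [hc] at hz
        have hPnz : Pn P n (a, e) ≠ 0 := by
          intro h0
          apply hz
          rw [hP'def]
          simp [hcond, h0]
        have hPeq : Pn P n (a, e)
            = (∏ i, margE P (e i)) * Real.exp (-(SY P n (a, e) + n * H)) :=
          Pn_pos_eq hP hPnz
        have hQe : margE (Pn P n) e = ∏ i, margE P (e i) := margE_Pn P n e
        have hP'eq : P' (a, e) = Pn P n (a, e) := by
          rw [hP'def]
          simp [hcond]
        rw [hP'eq, hPeq, ← hQe, mul_comm, mul_div_assoc, div_self (ne_of_gt hQ), mul_one]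
        apply Real.exp_le_exp.2
        have := neg_abs_le (SY P n (a, e))
        linarith
    · have hTpos : 0 < ∑ ae ∈ Finset.univ.filter (fun ae => |SY P n ae| ≤ n * δ),
          Pn P n ae := by
        have hsplit := Finset.sum_filter_add_sum_filter_not Finset.univ
          (fun ae => |SY P n ae| ≤ n * δ) (Pn P n)
        rw [sum_Pn hP n] at hsplit
        have h2 : ∑ ae ∈ Finset.univ.filter (fun ae => ¬ |SY P n ae| ≤ n * δ),
            Pn P n ae ≤ α := by
          rw [← hchebval]
          exact hcheb
        linarith
      obtain ⟨ae, hae, hne⟩ := Finset.exists_ne_zero_of_sum_ne_zero (ne_of_gt hTpos)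
      rw [Finset.mem_filter] at hae
      have hpos : 0 < Pn P n ae := lt_of_le_of_ne (Pn_nonneg hP.1 n ae) (Ne.symm hne)
      have hQpos : 0 < margE (Pn P n) ae.2 := by
        have h := le_margE (Pn_nonneg hP.1 n) ae.1 ae.2
        rw [Prod.mk.eta] at h
        exact lt_of_lt_of_le hpos h
      refine ⟨ae.1, ae.2, hQpos, ?_⟩
      apply div_pos _ hQpos
      have heq : P' (ae.1, ae.2) = Pn P n (ae.1, ae.2) := by
        rw [hP'def]
        have hc : |SY P n (ae.1, ae.2)| ≤ n * δ := by
          rw [Prod.mk.eta]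
          exact hae.2
        simp [hc]
      rw [heq, Prod.mk.eta]
      exact hpos
  set x₀ := eta (l1 (Pn P n) P') (Real.log M) +
      Real.log (1 + εv * M * Real.exp (-Hmin P' (margE (Pn P n)))) with hx₀
  have hΔ : DeltaBar_Imin M εv (Pn P n) ≤ x₀ := by
    rw [DeltaBar_Imin]
    exact csInf_le ⟨-(2 * Real.log 2), fun x hx =>
      bddBelow_DeltaSet (Pn_subDist hP n) hM1 (by linarith) x hx⟩ ⟨P', hP'sub, hP'mar, rfl⟩
  have h1 : eta (l1 (Pn P n) P') (Real.log M) ≤ 1 + α * (n * R + Real.log 2) := by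
    rw [eta]
    have ha : -l1 (Pn P n) P' * Real.log (l1 (Pn P n) P') ≤ 1 :=
      neg_mul_log_le_one hl1nn (hl1.trans (hα.trans (by norm_num)))
    have hb : l1 (Pn P n) P' * Real.log M ≤ α * (n * R + Real.log 2) :=
      mul_le_mul hl1 hMloghi (Real.log_nonneg hM1) hα0
    linarith
  have hz0 : 0 ≤ n * (R - H + δ) := mul_nonneg hn0.le (by linarith)
  have hz1 : (1 : ℝ) ≤ Real.exp (n * (R - H + δ)) := Real.one_le_exp hz0
  have h2 : Real.log (1 + εv * M * Real.exp (-Hmin P' (margE (Pn P n))))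
      ≤ Real.log (1 + 2 * εv) + n * (R - H + δ) := by
    have hy : εv * M * Real.exp (-Hmin P' (margE (Pn P n)))
        ≤ 2 * εv * Real.exp (n * (R - H + δ)) := by
      calc εv * M * Real.exp (-Hmin P' (margE (Pn P n)))
          ≤ εv * (2 * Real.exp (n * R)) * Real.exp (n * δ - n * H) := by
            apply mul_le_mul (mul_le_mul_of_nonneg_left hMle (by linarith)) hHminexp
              (Real.exp_nonneg _) (by positivity)
        _ = 2 * εv * (Real.exp (n * R) * Real.exp (n * δ - n * H)) := by ring
        _ = 2 * εv * Real.exp (n * R + (n * δ - n * H)) := by rw [Real.exp_add]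
        _ = 2 * εv * Real.exp (n * (R - H + δ)) := by
            congr 1
            ring
    calc Real.log (1 + εv * M * Real.exp (-Hmin P' (margE (Pn P n))))
        ≤ Real.log (1 + 2 * εv * Real.exp (n * (R - H + δ))) := by
          apply Real.log_le_log _ (by linarith)
          have : 0 ≤ εv * M * Real.exp (-Hmin P' (margE (Pn P n))) := by positivity
          linarith
      _ ≤ Real.log ((1 + 2 * εv) * Real.exp (n * (R - H + δ))) := by
          apply Real.log_le_log (by positivity)
          nlinarith
      _ = Real.log (1 + 2 * εv) + n * (R - H + δ) := by
          rw [Real.log_mul (by positivity) (Real.exp_ne_zero _), Real.log_exp]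
  calc DeltaBar_Imin M εv (Pn P n) ≤ x₀ := hΔ
    _ ≤ 1 + α * (n * R + Real.log 2) + Real.log (1 + 2 * εv) + n * (R - H + δ) := by
        rw [hx₀]
        linarith
end AuxDev5
section AuxDev6
set_option linter.unusedSectionVars false
set_option linter.unusedVariables false

variable {A E : Type*} [Fintype A] [Fintype E]

lemma LB {P : A × E → ℝ} (hP : IsDist P) {R : ℝ} (hR : condEnt P ≤ R)
    {δ εv : ℝ} (hδ : 0 < δ) {n : ℕ} (hn : 1 ≤ n) (hε : 1 ≤ εv)
    (hγ : Vr P / (n * δ ^ 2) + Real.exp (-(n * δ)) ≤ δ / (R + 1))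
    (hlog2 : 2 * Real.log 2 ≤ n * δ) :
    (n : ℝ) * (R - condEnt P - 3 * δ)
      ≤ DeltaBar_Imin ((⌈Real.exp (n * R)⌉₊ : ℝ)) εv (Pn P n) := by
  set H := condEnt P with hH
  set M : ℝ := ((⌈Real.exp (n * R)⌉₊ : ℝ)) with hM
  set α : ℝ := Vr P / (n * δ ^ 2) with hαdef
  have hn0 : (0 : ℝ) < n := by exact_mod_cast hn
  have hH0 : 0 ≤ H := condEnt_nonneg hP
  have hR0 : 0 ≤ R := hH0.trans hR
  have hexp1 : (1 : ℝ) ≤ Real.exp (n * R) := Real.one_le_exp (by positivity)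
  have hM1 : (1 : ℝ) ≤ M :=
    Nat.one_le_cast.2 (Nat.ceil_pos.2 (lt_of_lt_of_le one_pos hexp1))
  have hMlog : n * R ≤ Real.log M := by
    calc n * R = Real.log (Real.exp (n * R)) := (Real.log_exp _).symm
      _ ≤ Real.log M := Real.log_le_log (Real.exp_pos _) (Nat.le_ceil _)
  have hα0 : 0 ≤ α := by
    rw [hαdef]
    have := Vr_nonneg P hP.1
    positivity
  have hcheb := cheb hP n (t := n * δ) (by positivity)
  have hchebval : (n : ℝ) * Vr P / (n * δ) ^ 2 = α := by
    rw [hαdef]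
    field_simp
  rw [DeltaBar_Imin]
  apply le_csInf
  · exact ⟨eta (l1 (Pn P n) (Pn P n)) (Real.log M) +
      Real.log (1 + εv * M * Real.exp (-Hmin (Pn P n) (margE (Pn P n)))),
      Pn P n, Pn_subDist hP n, fun e => le_rfl, rfl⟩
  rintro x ⟨P', hP'sub, hP'mar, rfl⟩
  set β := Real.exp (-Hmin P' (margE (Pn P n))) with hβ
  have hβpos : 0 < β := Real.exp_pos _
  have hP'β : ∀ ae : (Fin n → A) × (Fin n → E), P' ae ≤ β * margE (Pn P n) ae.2 := by
    intro ae
    have h := exp_neg_Hmin_bound hP'sub.1 hP'mar ae.1 ae.2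
    rw [Prod.mk.eta] at h
    exact h
  set T := Finset.univ.filter
    (fun ae : (Fin n → A) × (Fin n → E) => Pn P n ae ≠ 0 ∧ |SY P n ae| ≤ n * δ) with hT
  have hTc : ∑ ae ∈ Finset.univ.filter
      (fun ae => ¬ (Pn P n ae ≠ 0 ∧ |SY P n ae| ≤ n * δ)), Pn P n ae ≤ α := by
    have hstep : ∀ ae ∈ Finset.univ.filter
        (fun ae => ¬ (Pn P n ae ≠ 0 ∧ |SY P n ae| ≤ n * δ)),
        Pn P n ae ≤ if ¬ |SY P n ae| ≤ n * δ then Pn P n ae else 0 := by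
      intro ae hae
      rw [Finset.mem_filter] at hae
      by_cases hc : |SY P n ae| ≤ n * δ
      · have h0 : Pn P n ae = 0 := by
          by_contra h
          exact hae.2 ⟨h, hc⟩
        simp [hc, h0]
      · simp [hc]
    calc ∑ ae ∈ Finset.univ.filter
          (fun ae => ¬ (Pn P n ae ≠ 0 ∧ |SY P n ae| ≤ n * δ)), Pn P n ae
        ≤ ∑ ae ∈ Finset.univ.filter
            (fun ae => ¬ (Pn P n ae ≠ 0 ∧ |SY P n ae| ≤ n * δ)),
            (if ¬ |SY P n ae| ≤ n * δ then Pn P n ae else 0) := Finset.sum_le_sum hstep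
      _ ≤ ∑ ae : (Fin n → A) × (Fin n → E),
            (if ¬ |SY P n ae| ≤ n * δ then Pn P n ae else 0) := by
          apply Finset.sum_le_sum_of_subset_of_nonneg (Finset.filter_subset _ _)
          intro ae _ _
          split
          · exact Pn_nonneg hP.1 n ae
          · exact le_rfl
      _ = ∑ ae ∈ Finset.univ.filter (fun ae => ¬ |SY P n ae| ≤ n * δ), Pn P n ae :=
          (Finset.sum_filter _ _).symm
      _ ≤ α := by
          rw [← hchebval]
          exact hcheb
  have hTlow : 1 - α ≤ ∑ ae ∈ T, Pn P n ae := by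
    have hsplit := Finset.sum_filter_add_sum_filter_not Finset.univ
      (fun ae : (Fin n → A) × (Fin n → E) => Pn P n ae ≠ 0 ∧ |SY P n ae| ≤ n * δ) (Pn P n)
    rw [sum_Pn hP n] at hsplit
    rw [hT]
    linarith
  have hSTle : ∑ ae ∈ T, Pn P n ae ≤ 1 := by
    calc ∑ ae ∈ T, Pn P n ae ≤ ∑ ae, Pn P n ae := by
          apply Finset.sum_le_sum_of_subset_of_nonneg (Finset.filter_subset _ _)
          intro ae _ _
          exact Pn_nonneg hP.1 n ae
      _ = 1 := sum_Pn hP n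
  have hP'T : ∑ ae ∈ T, P' ae ≤ β * Real.exp (n * δ + n * H) := by
    have hterm : ∀ ae ∈ T, P' ae ≤ β * Real.exp (n * δ + n * H) * Pn P n ae := by
      intro ae hae
      rw [hT, Finset.mem_filter] at hae
      have hPeq : Pn P n ae = (∏ i, margE P (ae.2 i)) *
          Real.exp (-(SY P n ae + n * H)) := Pn_pos_eq hP hae.2.1
      have hprodQ : ∏ i, margE P (ae.2 i) = Pn P n ae * Real.exp (SY P n ae + n * H) := by
        rw [hPeq, mul_assoc, ← Real.exp_add, neg_add_cancel, Real.exp_zero, mul_one]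
      calc P' ae ≤ β * margE (Pn P n) ae.2 := hP'β ae
        _ = β * (Pn P n ae * Real.exp (SY P n ae + n * H)) := by
            rw [margE_Pn, hprodQ]
        _ ≤ β * (Pn P n ae * Real.exp (n * δ + n * H)) := by
            apply mul_le_mul_of_nonneg_left _ hβpos.le
            apply mul_le_mul_of_nonneg_left _ (Pn_nonneg hP.1 n ae)
            apply Real.exp_le_exp.2
            have := le_abs_self (SY P n ae)
            linarith [hae.2.2]
        _ = β * Real.exp (n * δ + n * H) * Pn P n ae := by ring
    calc ∑ ae ∈ T, P' ae ≤ ∑ ae ∈ T, β * Real.exp (n * δ + n * H) * Pn P n ae :=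
          Finset.sum_le_sum hterm
      _ = β * Real.exp (n * δ + n * H) * ∑ ae ∈ T, Pn P n ae := by
          rw [Finset.mul_sum]
      _ ≤ β * Real.exp (n * δ + n * H) * 1 := by
          apply mul_le_mul_of_nonneg_left hSTle (by positivity)
      _ = β * Real.exp (n * δ + n * H) := mul_one _
  have hl1low : (∑ ae ∈ T, Pn P n ae) - (∑ ae ∈ T, P' ae) ≤ l1 (Pn P n) P' := by
    rw [l1_eq, ← Finset.sum_sub_distrib]
    calc ∑ ae ∈ T, (Pn P n ae - P' ae) ≤ ∑ ae ∈ T, |Pn P n ae - P' ae| :=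
          Finset.sum_le_sum fun ae _ => le_abs_self _
      _ ≤ ∑ ae : (Fin n → A) × (Fin n → E), |Pn P n ae - P' ae| := by
          apply Finset.sum_le_sum_of_subset_of_nonneg (Finset.filter_subset _ _)
          intro ae _ _
          exact abs_nonneg _
  have hl1nn : 0 ≤ l1 (Pn P n) P' := l1_nonneg _ _
  have hl1le2 : l1 (Pn P n) P' ≤ 2 := l1_le_two (Pn_subDist hP n) hP'sub
  have hterm2nn : 0 ≤ Real.log (1 + εv * M * β) := by
    apply Real.log_nonneg
    have : 0 ≤ εv * M * β := by positivity
    linarith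
  rcases le_total (Real.exp (-(n * H + 2 * (n * δ)))) β with hcase | hcase
  · -- β is large: second term dominates
    have hlogβ : -(n * H + 2 * (n * δ)) ≤ Real.log β := by
      calc -(n * H + 2 * (n * δ)) = Real.log (Real.exp (-(n * H + 2 * (n * δ)))) :=
            (Real.log_exp _).symm
        _ ≤ Real.log β := Real.log_le_log (Real.exp_pos _) hcase
    have hterm2 : n * R - (n * H + 2 * (n * δ)) ≤ Real.log (1 + εv * M * β) := by
      have h1 : Real.log (εv * M * β) ≤ Real.log (1 + εv * M * β) := by
        apply Real.log_le_log (by positivity)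
        linarith
      have h2 : Real.log (εv * M * β) = Real.log εv + Real.log M + Real.log β := by
        rw [Real.log_mul (by positivity) (ne_of_gt hβpos),
          Real.log_mul (by positivity) (by positivity)]
      have h3 : 0 ≤ Real.log εv := Real.log_nonneg hε
      linarith
    have hterm1 : -(2 * Real.log 2) ≤ eta (l1 (Pn P n) P') (Real.log M) :=
      eta_lower hl1nn hl1le2 (Real.log_nonneg hM1)
    have : (n : ℝ) * (R - H - 3 * δ)
        = n * R - (n * H + 2 * (n * δ)) - n * δ := by ring
    linarith
  · -- β is small: l1 is close to 1
    have hsmall : β * Real.exp (n * δ + n * H) ≤ Real.exp (-(n * δ)) := by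
      calc β * Real.exp (n * δ + n * H)
          ≤ Real.exp (-(n * H + 2 * (n * δ))) * Real.exp (n * δ + n * H) := by
            apply mul_le_mul_of_nonneg_right hcase (Real.exp_nonneg _)
        _ = Real.exp (-(n * H + 2 * (n * δ)) + (n * δ + n * H)) := (Real.exp_add _ _).symm
        _ = Real.exp (-(n * δ)) := by
            congr 1
            ring
    have hl1big : 1 - δ / (R + 1) ≤ l1 (Pn P n) P' := by
      have h1 : 1 - α - Real.exp (-(n * δ)) ≤ l1 (Pn P n) P' := by
        have := hl1low
        linarith [hP'T, hTlow, hsmall]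
      linarith [hγ]
    have hterm1 : (1 - δ / (R + 1)) * (n * R) - 2 * Real.log 2
        ≤ eta (l1 (Pn P n) P') (Real.log M) := by
      rw [eta]
      have ha : l1 (Pn P n) P' * Real.log (l1 (Pn P n) P') ≤ 2 * Real.log 2 :=
        mul_log_le_two_log_two hl1nn hl1le2
      have hb : (1 - δ / (R + 1)) * (n * R) ≤ l1 (Pn P n) P' * Real.log M :=
        mul_le_mul hl1big hMlog (by positivity) hl1nn
      linarith
    have hγR : δ / (R + 1) * R ≤ δ := by
      rw [div_mul_eq_mul_div, div_le_iff₀ (by linarith)]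
      nlinarith
    have hkey : (n : ℝ) * (R - H - 3 * δ) ≤ (1 - δ / (R + 1)) * (n * R) - 2 * Real.log 2 := by
      have h1 : (1 - δ / (R + 1)) * (n * R) = n * R - n * (δ / (R + 1) * R) := by ring
      have h2 : n * (δ / (R + 1) * R) ≤ n * δ := by
        apply mul_le_mul_of_nonneg_left hγR hn0.le
      have e1 : (n : ℝ) * (R - H - 3 * δ) = n * R - n * H - 3 * (n * δ) := by ring
      have e2 : 0 ≤ (n : ℝ) * H := mul_nonneg hn0.le hH0
      have e3 : 0 ≤ (n : ℝ) * δ := mul_nonneg hn0.le hδ.le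
      linarith
    linarith
end AuxDev6
/-- Theorem `t8-27-4` of the paper: for `R ≥ H(A|E|P)`, the equivocation-type
bound `Δ̲_{I,min}(⌈e^{nR}⌉, P(n) | P^n)` grows linearly with rate exactly
`R - H(A|E|P)`. -/
theorem statement18 {A E : Type*} [Fintype A] [Fintype E] [Nonempty A] [Nonempty E]
    (P : A × E → ℝ) (hP : IsDist P) (R : ℝ) (hR : condEnt P ≤ R)
    (Pol : Polynomial ℝ) (hPol : ∀ n : ℕ, 0 < n → 1 ≤ Pol.eval (n : ℝ)) :
    Filter.Tendsto (fun n : ℕ =>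
        (1 / (n : ℝ)) *
          DeltaBar_Imin ((⌈Real.exp (n * R)⌉₊ : ℝ)) (Pol.eval (n : ℝ)) (Pn P n))
      Filter.atTop (nhds (R - condEnt P)) := by
  have hH0 : 0 ≤ condEnt P := condEnt_nonneg hP
  have hR0 : 0 ≤ R := hH0.trans hR
  have hVr : 0 ≤ Vr P := Vr_nonneg P hP.1
  have hinv : Filter.Tendsto (fun n : ℕ => ((n : ℝ))⁻¹) Filter.atTop (nhds 0) :=
    tendsto_inv_atTop_zero.comp tendsto_natCast_atTop_atTop
  rw [Metric.tendsto_atTop]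
  intro ε hε
  set δ : ℝ := ε / 8 with hδdef
  have hδ : 0 < δ := by positivity
  set C : ℝ := Vr P / δ ^ 2 with hC
  have hC0 : 0 ≤ C := by positivity
  -- tendsto facts
  have t1 : Filter.Tendsto (fun n : ℕ => Vr P / (n * δ ^ 2)) Filter.atTop (nhds 0) := by
    have h := hinv.const_mul C
    rw [mul_zero] at h
    apply h.congr
    intro n
    rw [hC, div_eq_mul_inv, div_eq_mul_inv, mul_inv]
    ring
  have t2 : Filter.Tendsto (fun n : ℕ => Real.exp (-((n : ℝ) * δ))) Filter.atTop (nhds 0) := by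
    have hmul : Filter.Tendsto (fun n : ℕ => (n : ℝ) * δ) Filter.atTop Filter.atTop :=
      Filter.Tendsto.atTop_mul_const hδ tendsto_natCast_atTop_atTop
    exact Real.tendsto_exp_neg_atTop_nhds_zero.comp hmul
  have t3 : Filter.Tendsto (fun n : ℕ => (1 + C * (R + Real.log 2)) / n)
      Filter.atTop (nhds 0) := by
    have h := hinv.const_mul (1 + C * (R + Real.log 2))
    rw [mul_zero] at h
    apply h.congr
    intro n
    rw [div_eq_mul_inv]
  have hpoly := poly_log_tendsto ((1 : Polynomial ℝ) + 2 * Pol)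
  -- eventual facts
  have ev_a : ∀ᶠ n : ℕ in Filter.atTop, Vr P / (n * δ ^ 2) ≤ 1 / 2 :=
    t1.eventually (eventually_le_nhds (by norm_num))
  have ev_b : ∀ᶠ n : ℕ in Filter.atTop,
      Vr P / (n * δ ^ 2) + Real.exp (-((n : ℝ) * δ)) ≤ δ / (R + 1) := by
    have h := t1.add t2
    rw [add_zero] at h
    exact h.eventually (eventually_le_nhds (by positivity))
  have ev_c : ∀ᶠ n : ℕ in Filter.atTop, 2 * Real.log 2 ≤ (n : ℝ) * δ :=
    (Filter.Tendsto.atTop_mul_const hδ tendsto_natCast_atTop_atTop).eventually_ge_atTop _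
  have ev_d : ∀ᶠ n : ℕ in Filter.atTop, (1 + C * (R + Real.log 2)) / n ≤ δ :=
    t3.eventually (eventually_le_nhds hδ)
  have ev_e : ∀ᶠ n : ℕ in Filter.atTop,
      Real.log (max 1 (((1 : Polynomial ℝ) + 2 * Pol).eval (n : ℝ))) / n ≤ δ :=
    hpoly.eventually (eventually_le_nhds hδ)
  have hev : ∀ᶠ n : ℕ in Filter.atTop,
      dist ((1 / (n : ℝ)) *
        DeltaBar_Imin ((⌈Real.exp (n * R)⌉₊ : ℝ)) (Pol.eval (n : ℝ)) (Pn P n))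
        (R - condEnt P) < ε := by
    filter_upwards [ev_a, ev_b, ev_c, ev_d, ev_e, Filter.eventually_ge_atTop 1]
      with n ha hb hc hd he hn
    have hn0 : (0 : ℝ) < n := by exact_mod_cast hn
    have hnpos : 0 < n := hn
    have hε1 : 1 ≤ Pol.eval (n : ℝ) := hPol n hnpos
    have hevaleq : ((1 : Polynomial ℝ) + 2 * Pol).eval (n : ℝ) = 1 + 2 * Pol.eval (n : ℝ) := by
      simp
    have hmaxeq : max 1 (((1 : Polynomial ℝ) + 2 * Pol).eval (n : ℝ))
        = 1 + 2 * Pol.eval (n : ℝ) := by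
      rw [hevaleq]
      exact max_eq_right (by linarith)
    rw [hmaxeq] at he
    -- upper bound
    have hUB := UB hP hR hδ hn hε1 ha
    have hαC : Vr P / (n * δ ^ 2) * ((n : ℝ) * R + Real.log 2) ≤ C * (R + Real.log 2) := by
      have heq : Vr P / (n * δ ^ 2) * ((n : ℝ) * R + Real.log 2)
          = C * R + C * Real.log 2 / n := by
        rw [hC]
        field_simp
      rw [heq]
      have h2 : C * Real.log 2 / n ≤ C * Real.log 2 :=
        div_le_self (mul_nonneg hC0 (Real.log_nonneg one_le_two)) (by exact_mod_cast hn)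
      linarith [mul_nonneg hC0 (Real.log_nonneg one_le_two)]
    have hUB2 : DeltaBar_Imin ((⌈Real.exp (n * R)⌉₊ : ℝ)) (Pol.eval (n : ℝ)) (Pn P n)
        ≤ (1 + C * (R + Real.log 2)) + Real.log (1 + 2 * Pol.eval (n : ℝ))
          + n * (R - condEnt P + δ) := by
      linarith [hUB, hαC]
    have hup : (1 / (n : ℝ)) *
        DeltaBar_Imin ((⌈Real.exp (n * R)⌉₊ : ℝ)) (Pol.eval (n : ℝ)) (Pn P n)
        ≤ R - condEnt P + 3 * δ := by
      have hmul := mul_le_mul_of_nonneg_left hUB2 (by positivity : (0:ℝ) ≤ 1 / (n : ℝ))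
      have hsplit : (1 / (n : ℝ)) * ((1 + C * (R + Real.log 2))
          + Real.log (1 + 2 * Pol.eval (n : ℝ)) + n * (R - condEnt P + δ))
          = (1 + C * (R + Real.log 2)) / n + Real.log (1 + 2 * Pol.eval (n : ℝ)) / n
            + (R - condEnt P + δ) := by
        field_simp
      rw [hsplit] at hmul
      linarith [hd, he]
    -- lower bound
    have hLB := LB hP hR hδ hn hε1 hb hc
    have hlow : R - condEnt P - 3 * δ ≤ (1 / (n : ℝ)) *
        DeltaBar_Imin ((⌈Real.exp (n * R)⌉₊ : ℝ)) (Pol.eval (n : ℝ)) (Pn P n) := by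
      have hmul := mul_le_mul_of_nonneg_left hLB (by positivity : (0:ℝ) ≤ 1 / (n : ℝ))
      have heq : (1 / (n : ℝ)) * ((n : ℝ) * (R - condEnt P - 3 * δ))
          = R - condEnt P - 3 * δ := by
        field_simp
      rw [heq] at hmul
      exact hmul
    rw [Real.dist_eq, abs_lt]
    constructor
    · rw [hδdef] at hlow
      linarith
    · rw [hδdef] at hup
      linarith
  exact Filter.eventually_atTop.1 hev
end Hayashi
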